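/- Let k ≥ 2. If a signed graph (G,σ) admits a complete k-colouring, then the underlying graph G has a matching of size at least ⌊k/2⌋. Consequently, if the maximum matching of G has size α, then ψ(G,σ) ≤ 2α + 1. -/

import Mathlib

open SimpleGraph

/-- A signature on a graph: a symmetric assignment of signs (`1` or `-1`) to pairs of
vertices (only the values on edges are relevant). -/
def IsSignature {V : Type*} (σ : V → V → ℤ) : Prop :=
  (∀ u v, σ u v = σ v u) ∧ (∀ u v, σ u v = 1 ∨ σ u v = -1)

/-- `σ'` is obtained from `σ` by switching a set of vertices: every vertex gets a
switching value `±1`, and the sign of an edge is multiplied by the values at its ends. -/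
def SwitchEquiv {V : Type*} (σ σ' : V → V → ℤ) : Prop :=
  ∃ s : V → ℤ, (∀ v, s v = 1 ∨ s v = -1) ∧ ∀ u v, σ' u v = s u * s v * σ u v

/-- The colour set `M_k`, as a set of integers: `{±1, …, ±n}` if `k = 2n`, and
`{-n, …, -1, 0, 1, …, n}` if `k = 2n+1` (colour `±0` is represented by `0`). -/
def colourSet (k : ℕ) : Set ℤ :=
  if Even k then {i | i ≠ 0 ∧ i.natAbs ≤ k / 2} else {i | i.natAbs ≤ k / 2}

/-- A proper `k`-colouring of the signed graph `(G, σ)`: colours come from `M_k` and,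
for each edge `uv`, `φ u ≠ σ(uv) · φ v`. -/
def IsProperColouring {V : Type*} (G : SimpleGraph V) (σ : V → V → ℤ) (k : ℕ)
    (φ : V → ℤ) : Prop :=
  (∀ v, φ v ∈ colourSet k) ∧ ∀ u v, G.Adj u v → φ u ≠ σ u v * φ v

/-- The sign of an integer for the purpose of switching: `-1` for negative colours,
`1` otherwise. -/
def isgn (x : ℤ) : ℤ := if x < 0 then -1 else 1

/-- The sign of the edge `uv` after switching every vertex whose colour is negative. -/
def redSign {V : Type*} (σ : V → V → ℤ) (φ : V → ℤ) (u v : V) : ℤ :=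
  isgn (φ u) * isgn (φ v) * σ u v

/-- After switching all negatively-coloured vertices and taking absolute values of
colours, there is an edge of `(G, σ)` whose ends get values `i` and `j` and whose
resulting sign is `s`. -/
def HasEdgeType {V : Type*} (G : SimpleGraph V) (σ : V → V → ℤ) (φ : V → ℤ)
    (i j : ℕ) (s : ℤ) : Prop :=
  ∃ u v, G.Adj u v ∧ (φ u).natAbs = i ∧ (φ v).natAbs = j ∧ redSign σ φ u v = s

/-- A complete `k`-colouring of the signed graph `(G, σ)`. -/
def IsCompleteColouring {V : Type*} (G : SimpleGraph V) (σ : V → V → ℤ) (k : ℕ)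
    (φ : V → ℤ) : Prop :=
  IsProperColouring G σ k φ ∧
  (∀ i j : ℕ, (i : ℤ) ∈ colourSet k → (j : ℤ) ∈ colourSet k → i ≠ j →
    HasEdgeType G σ φ i j 1 ∧ HasEdgeType G σ φ i j (-1)) ∧
  (∀ i : ℕ, 1 ≤ i → (i : ℤ) ∈ colourSet k → HasEdgeType G σ φ i i (-1))

/-- Some signed graph equivalent to `(G, σ)` admits a complete `k`-colouring. -/
def AdmitsComplete {V : Type*} (G : SimpleGraph V) (σ : V → V → ℤ) (k : ℕ) : Prop :=
  ∃ σ', IsSignature σ' ∧ SwitchEquiv σ σ' ∧ ∃ φ, IsCompleteColouring G σ' k φ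

/-- The achromatic number of the signed graph `(G, σ)`: the largest `k` such that some
signed graph equivalent to `(G, σ)` admits a complete `k`-colouring. -/
noncomputable def psi {V : Type*} (G : SimpleGraph V) (σ : V → V → ℤ) : ℕ :=
  sSup {k | AdmitsComplete G σ k}

/-- The chromatic number of the signed graph `(G, σ)`: the smallest `k` such that
`(G, σ)` admits a proper `k`-colouring. -/
noncomputable def chi {V : Type*} (G : SimpleGraph V) (σ : V → V → ℤ) : ℕ :=
  sInf {k | ∃ φ, IsProperColouring G σ k φ}

lemma matching_of_complete {V : Type*} [Fintype V] (G : SimpleGraph V) (σ : V → V → ℤ)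
    (k : ℕ) (φ : V → ℤ) (h : IsCompleteColouring G σ k φ) :
    ∃ M : G.Subgraph, M.IsMatching ∧ k / 2 ≤ M.edgeSet.ncard := by
  classical
  set n := k / 2 with hn
  have key : ∀ i : ℕ, 1 ≤ i → i ≤ n →
      ∃ u v, G.Adj u v ∧ (φ u).natAbs = i ∧ (φ v).natAbs = i := by
    intro i h1 h2
    have hmem : (i : ℤ) ∈ colourSet k := by
      unfold colourSet
      split
      · exact ⟨by exact_mod_cast Nat.one_le_iff_ne_zero.mp h1, by simpa using h2⟩
      · simpa using h2
    obtain ⟨u, v, hadj, h1', h2', _⟩ := h.2.2 i h1 hmem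
    exact ⟨u, v, hadj, h1', h2'⟩
  rcases Nat.eq_zero_or_pos n with hn0 | hn1
  · refine ⟨⊥, ?_, by simp [hn0]⟩
    intro x hx
    simp [Subgraph.verts_bot] at hx
  · obtain ⟨u0, v0, _⟩ := key 1 le_rfl hn1
    have key' : ∀ i : ℕ, ∃ p : V × V, 1 ≤ i → i ≤ n →
        G.Adj p.1 p.2 ∧ (φ p.1).natAbs = i ∧ (φ p.2).natAbs = i := by
      intro i
      by_cases hi : 1 ≤ i ∧ i ≤ n
      · obtain ⟨u, v, h'⟩ := key i hi.1 hi.2; exact ⟨(u, v), fun _ _ => h'⟩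
      · exact ⟨(u0, v0), fun h1 h2 => absurd ⟨h1, h2⟩ hi⟩
    choose p hp using key'
    set u : ℕ → V := fun i => (p i).1 with hu
    set v : ℕ → V := fun i => (p i).2 with hv
    have hune : ∀ i, 1 ≤ i → i ≤ n → u i ≠ v i := fun i h1 h2 => (hp i h1 h2).1.ne
    have hau : ∀ i, 1 ≤ i → i ≤ n → (φ (u i)).natAbs = i := fun i h1 h2 => (hp i h1 h2).2.1
    have hav : ∀ i, 1 ≤ i → i ≤ n → (φ (v i)).natAbs = i := fun i h1 h2 => (hp i h1 h2).2.2
    let M : G.Subgraph :=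
      { verts := {x | ∃ i, 1 ≤ i ∧ i ≤ n ∧ (x = u i ∨ x = v i)}
        Adj := fun a b => ∃ i, 1 ≤ i ∧ i ≤ n ∧ ((a = u i ∧ b = v i) ∨ (a = v i ∧ b = u i))
        adj_sub := by
          rintro a b ⟨i, h1, h2, hc⟩
          rcases hc with ⟨rfl, rfl⟩ | ⟨rfl, rfl⟩
          · exact (hp i h1 h2).1
          · exact (hp i h1 h2).1.symm
        edge_vert := by
          rintro a b ⟨i, h1, h2, hc⟩
          rcases hc with ⟨rfl, _⟩ | ⟨rfl, _⟩
          · exact ⟨i, h1, h2, Or.inl rfl⟩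
          · exact ⟨i, h1, h2, Or.inr rfl⟩
        symm := by
          constructor
          rintro a b ⟨i, h1, h2, hc⟩
          rcases hc with ⟨rfl, rfl⟩ | ⟨rfl, rfl⟩
          · exact ⟨i, h1, h2, Or.inr ⟨rfl, rfl⟩⟩
          · exact ⟨i, h1, h2, Or.inl ⟨rfl, rfl⟩⟩ }
    have hmatch : M.IsMatching := by
      rintro x ⟨i, h1, h2, hx⟩
      rcases hx with rfl | rfl
      · refine ⟨v i, ⟨i, h1, h2, Or.inl ⟨rfl, rfl⟩⟩, ?_⟩
        rintro y ⟨j, hj1, hj2, hc⟩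
        rcases hc with ⟨hxj, rfl⟩ | ⟨hxj, rfl⟩
        · have hji : j = i := by
            rw [← hau j hj1 hj2, ← hxj, hau i h1 h2]
          rw [hji]
        · have hji : j = i := by
            rw [← hav j hj1 hj2, ← hxj, hau i h1 h2]
          rw [hji] at hxj
          exact absurd hxj (hune i h1 h2)
      · refine ⟨u i, ⟨i, h1, h2, Or.inr ⟨rfl, rfl⟩⟩, ?_⟩
        rintro y ⟨j, hj1, hj2, hc⟩
        rcases hc with ⟨hxj, rfl⟩ | ⟨hxj, rfl⟩
        · have hji : j = i := by
            rw [← hau j hj1 hj2, ← hxj, hav i h1 h2]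
          rw [hji] at hxj
          exact absurd hxj.symm (hune i h1 h2)
        · have hji : j = i := by
            rw [← hav j hj1 hj2, ← hxj, hav i h1 h2]
          rw [hji]
    have hinj : Set.InjOn (fun i => s(u i, v i)) (Set.Icc 1 n) := by
      rintro i ⟨hi1, hi2⟩ j ⟨hj1, hj2⟩ hij
      simp only [Sym2.eq, Sym2.rel_iff', Prod.mk.injEq, Prod.swap_prod_mk] at hij
      rcases hij with ⟨h1, _⟩ | ⟨h1, _⟩
      · rw [← hau i hi1 hi2, h1, hau j hj1 hj2]
      · rw [← hau i hi1 hi2, h1, hav j hj1 hj2]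
    have hsub : (fun i => s(u i, v i)) '' (Set.Icc 1 n) ⊆ M.edgeSet := by
      rintro e ⟨i, ⟨h1, h2⟩, rfl⟩
      exact Subgraph.mem_edgeSet.mpr ⟨i, h1, h2, Or.inl ⟨rfl, rfl⟩⟩
    have hcard : n ≤ M.edgeSet.ncard := by
      have h1 : ((fun i => s(u i, v i)) '' (Set.Icc 1 n)).ncard = n := by
        rw [Set.ncard_image_of_injOn hinj, ← Finset.coe_Icc, Set.ncard_coe_finset,
          Nat.card_Icc]
        omega
      calc n = ((fun i => s(u i, v i)) '' (Set.Icc 1 n)).ncard := h1.symm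
        _ ≤ M.edgeSet.ncard := Set.ncard_le_ncard hsub (Set.toFinite _)
    exact ⟨M, hmatch, hcard⟩

/-- If a signed graph admits a complete `k`-colouring (`k ≥ 2`), then the
underlying graph has a matching of size at least `⌊k/2⌋`; consequently, if the maximum
matching of `G` has size `α`, then `ψ(G,σ) ≤ 2α + 1`. -/
theorem statement0 {V : Type*} [Fintype V] (G : SimpleGraph V) (σ : V → V → ℤ)
    (hσ : IsSignature σ) :
    (∀ k : ℕ, 2 ≤ k → (∃ φ, IsCompleteColouring G σ k φ) →
      ∃ M : G.Subgraph, M.IsMatching ∧ k / 2 ≤ M.edgeSet.ncard) ∧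
    (∀ α : ℕ,
      (∃ M : G.Subgraph, M.IsMatching ∧ M.edgeSet.ncard = α) →
      (∀ M : G.Subgraph, M.IsMatching → M.edgeSet.ncard ≤ α) →
      psi G σ ≤ 2 * α + 1) := by
  constructor
  · rintro k _ ⟨φ, hφ⟩
    exact matching_of_complete G σ k φ hφ
  · rintro α - hmax
    apply csSup_le'
    rintro k ⟨σ', -, -, φ, hφ⟩
    obtain ⟨M, hM, hcard⟩ := matching_of_complete G σ' k φ hφ
    have := hmax M hM
    omega
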